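/- On the 3-torus 𝕋³ with pseudo-coordinates (θ₁, θ₂, θ₃), the forms ω₁ = cosθ₁ dθ₂ + sinθ₁ dθ₃ and ω₂ = −sinθ₁ dθ₂ + cosθ₁ dθ₃ generate a round contact circle: their Reeb vector fields are R₁ = cosθ₁ ∂θ₂ + sinθ₁ ∂θ₃ and R₂ = −sinθ₁ ∂θ₂ + cosθ₁ ∂θ₃, and these satisfy ωᵢ(Rⱼ) = δᵢⱼ and R₁ ⨼ dω₂ + R₂ ⨼ dω₁ = 0. -/

import Mathlib

open scoped BigOperators

noncomputable section

abbrev E3 : Type := Fin 3 → ℝ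

/-- `ω₁ = cosθ₁ dθ₂ + sinθ₁ dθ₃` on the 3-torus (angular coordinates). -/
def w1 (θ v : E3) : ℝ := Real.cos (θ 0) * v 1 + Real.sin (θ 0) * v 2

/-- `ω₂ = −sinθ₁ dθ₂ + cosθ₁ dθ₃` on the 3-torus (angular coordinates). -/
def w2 (θ v : E3) : ℝ := -Real.sin (θ 0) * v 1 + Real.cos (θ 0) * v 2

/-- `R₁ = cosθ₁ ∂θ₂ + sinθ₁ ∂θ₃`. -/
def r1 (θ : E3) : E3 := ![0, Real.cos (θ 0), Real.sin (θ 0)]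

/-- `R₂ = −sinθ₁ ∂θ₂ + cosθ₁ ∂θ₃`. -/
def r2 (θ : E3) : E3 := ![0, -Real.sin (θ 0), Real.cos (θ 0)]

/-- Exterior derivative of a 1-form, evaluated at `x` on `u, v`. -/
def extd (ω : E3 → E3 → ℝ) (x u v : E3) : ℝ :=
  fderiv ℝ (fun y => ω y v) x u - fderiv ℝ (fun y => ω y u) x v

lemma key1 (a b : ℝ) (x u : E3) :
    fderiv ℝ (fun y : E3 => Real.cos (y 0) * a + Real.sin (y 0) * b) x u
      = (-Real.sin (x 0) * a + Real.cos (x 0) * b) * u 0 := by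
  have hp : HasFDerivAt (fun y : E3 => y 0)
      (ContinuousLinearMap.proj 0 : E3 →L[ℝ] ℝ) x :=
    (ContinuousLinearMap.proj 0 : E3 →L[ℝ] ℝ).hasFDerivAt
  have hc := (Real.hasDerivAt_cos (x 0)).comp_hasFDerivAt x hp
  have hs := (Real.hasDerivAt_sin (x 0)).comp_hasFDerivAt x hp
  have h := ((hc.mul_const a).add (hs.mul_const b)).fderiv
  simp only [Function.comp, Pi.add_def, Pi.neg_apply] at h
  rw [h]
  simp [ContinuousLinearMap.proj]
  ring

lemma key2 (a b : ℝ) (x u : E3) :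
    fderiv ℝ (fun y : E3 => -Real.sin (y 0) * a + Real.cos (y 0) * b) x u
      = (-Real.cos (x 0) * a + -Real.sin (x 0) * b) * u 0 := by
  have hp : HasFDerivAt (fun y : E3 => y 0)
      (ContinuousLinearMap.proj 0 : E3 →L[ℝ] ℝ) x :=
    (ContinuousLinearMap.proj 0 : E3 →L[ℝ] ℝ).hasFDerivAt
  have hc := (Real.hasDerivAt_cos (x 0)).comp_hasFDerivAt x hp
  have hs := (Real.hasDerivAt_sin (x 0)).comp_hasFDerivAt x hp
  have h := (((hs.neg).mul_const a).add (hc.mul_const b)).fderiv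
  simp only [Function.comp, Pi.add_def, Pi.neg_apply] at h
  rw [h]
  simp [ContinuousLinearMap.proj]
  ring

/-- On 𝕋³, the forms `ω₁ = cosθ₁ dθ₂ + sinθ₁ dθ₃` and
`ω₂ = −sinθ₁ dθ₂ + cosθ₁ dθ₃` generate a round contact circle: their Reeb
vector fields are `R₁ = cosθ₁ ∂θ₂ + sinθ₁ ∂θ₃` and
`R₂ = −sinθ₁ ∂θ₂ + cosθ₁ ∂θ₃` (so `ωᵢ(Rᵢ) = 1`, `Rᵢ ⨼ dωᵢ = 0`), and they
satisfy `ωᵢ(Rⱼ) = δᵢⱼ` and `R₁ ⨼ dω₂ + R₂ ⨼ dω₁ = 0`. -/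
theorem stmt16 :
    (∀ θ : E3, w1 θ (r1 θ) = 1 ∧ w2 θ (r2 θ) = 1 ∧
      w1 θ (r2 θ) = 0 ∧ w2 θ (r1 θ) = 0) ∧
    (∀ θ u, extd w1 θ (r1 θ) u = 0) ∧
    (∀ θ u, extd w2 θ (r2 θ) u = 0) ∧
    (∀ θ u, extd w2 θ (r1 θ) u + extd w1 θ (r2 θ) u = 0) := by
  refine ⟨fun θ => ?_, fun θ u => ?_, fun θ u => ?_, fun θ u => ?_⟩
  · simp [w1, w2, r1, r2]
    constructor <;> ring_nf <;>
      simp [Real.sin_sq_add_cos_sq, Real.cos_sq_add_sin_sq] <;> ring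
  · simp only [extd, w1, key1, r1]
    simp
    left; ring
  · simp only [extd, w2, key2, r2]
    simp
    left; ring
  · simp only [extd, w1, w2, key1, key2, r1, r2]
    simp
    ring
end
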